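/- Let n be a positive integer. For every assignment of real values y_k, one for each k ∈ Ξ_n, there exists a real polynomial p in two variables of total degree at most n such that p(cos(k₁π/n), cos(k₂π/n)) = y_k for every k ∈ Ξ_n. -/

import Mathlib

attribute [local instance] Classical.propDecidable

/-- Ξ_n = {k : 0 ≤ k_i ≤ n, k1 ≡ k2 (mod 2)}. -/
noncomputable def Xi2 (n : ℕ) : Finset (ℤ × ℤ) :=
  (Finset.Icc ((0 : ℤ), (0 : ℤ)) ((n : ℤ), (n : ℤ))).filter
    fun k => k.1 % 2 = k.2 % 2

noncomputable section
namespace XuInterp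
open Polynomial Real Polynomial.Chebyshev MvPolynomial


/-- node value cos(i π / n) -/
def node (n : ℕ) (i : ℤ) : ℝ := Real.cos (i * Real.pi / n)

lemma node_even (n : ℕ) (i : ℤ) : node n (-i) = node n i := by
  unfold node; push_cast; rw [neg_mul, neg_div, Real.cos_neg]

lemma node_abs (n : ℕ) (i : ℤ) : node n |i| = node n i := by
  rcases abs_choice i with h | h
  · rw [h]
  · rw [h, node_even]

lemma node_reflect {n : ℕ} (hn : 0 < n) (i : ℤ) : node n ((n : ℤ) - i) = - node n i := by
  unfold node
  have hn' : (n:ℝ) ≠ 0 := by positivity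
  have : ((((n:ℤ) - i : ℤ)):ℝ) * Real.pi / n = Real.pi - i * Real.pi / n := by
    push_cast; field_simp
  rw [this, Real.cos_pi_sub]

lemma node_injOn {n : ℕ} (hn : 0 < n) : Set.InjOn (node n) (Set.Icc (0:ℤ) n) := by
  intro i hi j hj hij
  have hπ : 0 < Real.pi := Real.pi_pos
  have hn' : (0:ℝ) < n := by positivity
  have h1 : (i:ℝ) * Real.pi / n ∈ Set.Icc 0 Real.pi := by
    constructor
    · have : (0:ℝ) ≤ (i:ℝ) := by exact_mod_cast hi.1
      positivity
    · rw [div_le_iff₀ hn']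
      have : (i:ℝ) ≤ n := by exact_mod_cast hi.2
      nlinarith
  have h2 : (j:ℝ) * Real.pi / n ∈ Set.Icc 0 Real.pi := by
    constructor
    · have : (0:ℝ) ≤ (j:ℝ) := by exact_mod_cast hj.1
      positivity
    · rw [div_le_iff₀ hn']
      have : (j:ℝ) ≤ n := by exact_mod_cast hj.2
      nlinarith
  have heq := Real.injOn_cos h1 h2 hij
  field_simp at heq
  have hij' : (i:ℝ) = j := by linarith
  exact_mod_cast hij'

/-- the key trig identity -/
lemma trig4 (a b c d : ℝ) :
    Real.cos (a+b) * Real.cos (c-d) + Real.cos (c+d) * Real.cos (a-b)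
      = Real.cos (a+c) * Real.cos (b-d) + Real.cos (a-c) * Real.cos (b+d) := by
  simp [Real.cos_add, Real.cos_sub]; ring


lemma natDegree_T_le_nat : ∀ j : ℕ, (T ℝ (j:ℤ)).natDegree ≤ j := by
  intro j
  induction j using Nat.strong_induction_on with
  | _ j ih =>
    match j with
    | 0 => simp
    | 1 => simp
    | (m+2) =>
      have h : (((m+2:ℕ)) : ℤ) = ((m:ℤ) + 2) := by push_cast; ring
      rw [h, T_add_two ℝ (m : ℤ)]
      have h1 : (2 * Polynomial.X * T ℝ ((m:ℤ)+1)).natDegree ≤ m + 2 := by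
        apply le_trans (natDegree_mul_le)
        have e : ((m:ℤ)+1) = ((m+1 : ℕ) : ℤ) := by push_cast; ring
        rw [e]
        have := ih (m+1) (by omega)
        have h2X : (2 * Polynomial.X : ℝ[X]).natDegree ≤ 1 :=
          le_trans natDegree_mul_le (by simp)
        omega
      have h2 : (T ℝ (m:ℤ)).natDegree ≤ m + 2 := le_trans (ih m (by omega)) (by omega)
      exact le_trans (natDegree_sub_le _ _) (by omega)

lemma natDegree_T_le (j : ℤ) : (T ℝ j).natDegree ≤ j.natAbs := by
  have hT : T ℝ j = T ℝ ((j.natAbs : ℕ) : ℤ) := by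
    rcases le_or_gt 0 j with h | h
    · congr 1; omega
    · have e : j = -((j.natAbs : ℕ) : ℤ) := by omega
      conv_lhs => rw [e]
      rw [T_neg]
  rw [hT]
  exact natDegree_T_le_nat j.natAbs

/-- X * T j expansion -/
lemma X_mul_T (j : ℤ) : Polynomial.X * T ℝ j = (2⁻¹ : ℝ) • (T ℝ (j+1) + T ℝ (j-1)) := by
  have h : T ℝ (j+1) + T ℝ (j-1) = 2 * Polynomial.X * T ℝ j := by
    rw [T_add_one ℝ j]; ring
  have h2 : (2:ℝ) • (Polynomial.X * T ℝ j) = (2:ℝ) • ((2⁻¹ : ℝ) • (T ℝ (j+1) + T ℝ (j-1))) := by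
    rw [smul_smul, h]
    norm_num
    rw [two_smul]
    ring
  exact smul_right_injective ℝ[X] (by norm_num : (2:ℝ) ≠ 0) h2

/-- every polynomial of natDegree ≤ N is a combination of T 0 .. T N -/
lemma exists_cheb_coeffs (N : ℕ) (P : ℝ[X]) (h : P.natDegree ≤ N) :
    ∃ α : ℕ → ℝ, P = ∑ J ∈ Finset.range (N+1), α J • T ℝ (J:ℤ) := by
  have key : ∀ i : ℕ, (Polynomial.X : ℝ[X])^i ∈
      Submodule.span ℝ (Set.range fun J : Fin (i+1) => T ℝ (J:ℤ)) := by
    intro i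
    induction i with
    | zero =>
      simp only [pow_zero]
      have e : (1 : ℝ[X]) = T ℝ (((0 : Fin 1):ℕ):ℤ) := by simp
      rw [e]
      exact Submodule.subset_span ⟨0, rfl⟩
    | succ i ih =>
      have hXspan : ∀ J : Fin (i+1), Polynomial.X * T ℝ ((J:ℕ):ℤ) ∈
          Submodule.span ℝ (Set.range fun J : Fin (i+1+1) => T ℝ ((J:ℕ):ℤ)) := by
        intro J
        rw [X_mul_T]
        apply Submodule.smul_mem
        apply Submodule.add_mem
        · have e : ((J:ℕ):ℤ) + 1 = (((⟨J+1, by omega⟩ : Fin (i+2)) : ℕ):ℤ) := by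
            simp only [Fin.val_mk]; push_cast; ring
          rw [e]
          exact Submodule.subset_span ⟨_, rfl⟩
        · rcases Nat.eq_zero_or_pos (J:ℕ) with h0 | h0
          · have e : ((J:ℕ):ℤ) - 1 = -1 := by rw [h0]; ring
            rw [e, T_neg]
            have e2 : (1:ℤ) = (((⟨1, by omega⟩ : Fin (i+2)) : ℕ):ℤ) := by simp only [Fin.val_mk]; norm_num
            rw [e2]
            exact Submodule.subset_span ⟨_, rfl⟩
          · have e : ((J:ℕ):ℤ) - 1 = (((⟨(J:ℕ)-1, by omega⟩ : Fin (i+2)) : ℕ):ℤ) := by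
              simp only [Fin.val_mk]; omega
            rw [e]
            exact Submodule.subset_span ⟨_, rfl⟩
      rw [pow_succ, mul_comm]
      rw [Submodule.mem_span_range_iff_exists_fun] at ih
      obtain ⟨c, hc⟩ := ih
      rw [← hc, Finset.mul_sum]
      apply Submodule.sum_mem
      intro J _
      rw [mul_smul_comm]
      exact Submodule.smul_mem _ _ (hXspan J)
  -- now expand P
  have hP : P ∈ Submodule.span ℝ (Set.range fun J : Fin (N+1) => T ℝ ((J:ℕ):ℤ)) := by
    rw [show P = ∑ i ∈ Finset.range (N+1), Polynomial.monomial i (P.coeff i) from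
      P.as_sum_range' (N+1) (by omega)]
    apply Submodule.sum_mem
    intro i hi
    rw [← Polynomial.smul_X_eq_monomial]
    apply Submodule.smul_mem
    have hiN : i ≤ N := by simp at hi; omega
    refine Submodule.span_mono ?_ (key i)
    rintro _ ⟨J, rfl⟩
    exact ⟨⟨J, by omega⟩, rfl⟩
  rw [Submodule.mem_span_range_iff_exists_fun] at hP
  obtain ⟨c, hc⟩ := hP
  refine ⟨fun J => if h : J < N+1 then c ⟨J, h⟩ else 0, ?_⟩
  rw [← hc, Finset.sum_range]
  apply Finset.sum_congr rfl
  intro J _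
  simp [J.isLt]


/-- bivariate Chebyshev product T_j(x) T_k(y) -/
def chebMv (j k : ℤ) : MvPolynomial (Fin 2) ℝ :=
  Polynomial.aeval (MvPolynomial.X 0) (T ℝ j) * Polynomial.aeval (MvPolynomial.X 1) (T ℝ k)

lemma totalDegree_aeval_X (P : ℝ[X]) (i : Fin 2) :
    (Polynomial.aeval (MvPolynomial.X i : MvPolynomial (Fin 2) ℝ) P).totalDegree ≤ P.natDegree := by
  rw [Polynomial.aeval_eq_sum_range]
  apply le_trans (MvPolynomial.totalDegree_finset_sum _ _)
  apply Finset.sup_le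
  intro b hb
  apply le_trans (MvPolynomial.totalDegree_smul_le _ _)
  apply le_trans (MvPolynomial.totalDegree_pow _ _)
  simp only [MvPolynomial.totalDegree_X, mul_one]
  simp at hb; omega

lemma totalDegree_chebMv (j k : ℤ) : (chebMv j k).totalDegree ≤ j.natAbs + k.natAbs := by
  apply le_trans (MvPolynomial.totalDegree_mul _ _)
  have h1 := le_trans (totalDegree_aeval_X (T ℝ j) 0) (natDegree_T_le j)
  have h2 := le_trans (totalDegree_aeval_X (T ℝ k) 1) (natDegree_T_le k)
  omega

lemma eval_aeval_X (P : ℝ[X]) (i : Fin 2) (v : Fin 2 → ℝ) :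
    MvPolynomial.eval v (Polynomial.aeval (MvPolynomial.X i : MvPolynomial (Fin 2) ℝ) P)
      = P.eval (v i) := by
  rw [Polynomial.aeval_eq_sum_range]
  rw [map_sum]
  rw [Polynomial.eval_eq_sum_range]
  apply Finset.sum_congr rfl
  intro b _
  simp [smul_eq_mul]

lemma eval_chebMv (j k : ℤ) (θ φ : ℝ) :
    MvPolynomial.eval ![Real.cos θ, Real.cos φ] (chebMv j k)
      = Real.cos (j * θ) * Real.cos (k * φ) := by
  unfold chebMv
  rw [map_mul, eval_aeval_X, eval_aeval_X]
  simp [T_real_cos]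

/-- the basic symmetric building block -/
def Phi (J K : ℕ) : MvPolynomial (Fin 2) ℝ :=
  if 2 ∣ (J + K) then
    chebMv (((J:ℤ)+K)/2) (((J:ℤ)-K)/2) + chebMv (((J:ℤ)-K)/2) (((J:ℤ)+K)/2)
  else 0

lemma totalDegree_Phi {m J K : ℕ} (hJ : J ≤ m) (hK : K ≤ m) :
    (Phi J K).totalDegree ≤ m := by
  unfold Phi
  split
  · next hdvd =>
    apply le_trans (MvPolynomial.totalDegree_add _ _)
    have h1 := totalDegree_chebMv (((J:ℤ)+K)/2) (((J:ℤ)-K)/2)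
    have h2 := totalDegree_chebMv (((J:ℤ)-K)/2) (((J:ℤ)+K)/2)
    have : (((J:ℤ)+K)/2).natAbs + (((J:ℤ)-K)/2).natAbs ≤ m := by omega
    omega
  · simp

def block (m : ℕ) (α γ : ℕ → ℝ) : MvPolynomial (Fin 2) ℝ :=
  ∑ J ∈ Finset.range (m+1), ∑ K ∈ Finset.range (m+1), (α J * γ K) • Phi J K

lemma totalDegree_block (m : ℕ) (α γ : ℕ → ℝ) : (block m α γ).totalDegree ≤ m := by
  unfold block
  apply le_trans (MvPolynomial.totalDegree_finset_sum _ _)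
  apply Finset.sup_le
  intro J hJ
  apply le_trans (MvPolynomial.totalDegree_finset_sum _ _)
  apply Finset.sup_le
  intro K hK
  apply le_trans (MvPolynomial.totalDegree_smul_le _ _)
  exact totalDegree_Phi (by simp at hJ; omega) (by simp at hK; omega)



def Af (J K : ℕ) (u v : ℝ) : ℝ :=
  Real.cos (J*u) * Real.cos (K*v) + Real.cos (K*u) * Real.cos (J*v)

lemma cos_flip (J : ℕ) (t : ℝ) :
    Real.cos ((J:ℝ) * (t + Real.pi)) = (-1)^J * Real.cos ((J:ℝ)*t) := by
  have : (J:ℝ) * (t + Real.pi) = (J:ℝ)*t + (J:ℤ) * Real.pi := by push_cast; ring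
  rw [this, Real.cos_add_int_mul_pi]
  norm_num

lemma eval_Phi (J K : ℕ) (u v : ℝ) :
    MvPolynomial.eval ![Real.cos (u+v), Real.cos (u-v)] (Phi J K)
      = (Af J K u v + Af J K (u + Real.pi) (v + Real.pi)) / 2 := by
  have hflip : Af J K (u + Real.pi) (v + Real.pi) = (-1)^(J+K) * Af J K u v := by
    unfold Af
    rw [cos_flip, cos_flip, cos_flip, cos_flip]
    ring
  unfold Phi
  split
  · next hdvd =>
    rw [map_add, eval_chebMv, eval_chebMv]
    have hJK : ((((J:ℤ)+K)/2 : ℤ) : ℝ) + ((((J:ℤ)-K)/2 : ℤ) : ℝ) = (J:ℝ) := by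
      have : (((J:ℤ)+K)/2 : ℤ) + (((J:ℤ)-K)/2 : ℤ) = (J:ℤ) := by omega
      exact_mod_cast congrArg (fun z : ℤ => (z:ℝ)) this
    have hJK' : ((((J:ℤ)+K)/2 : ℤ) : ℝ) - ((((J:ℤ)-K)/2 : ℤ) : ℝ) = (K:ℝ) := by
      have : (((J:ℤ)+K)/2 : ℤ) - (((J:ℤ)-K)/2 : ℤ) = (K:ℤ) := by omega
      exact_mod_cast congrArg (fun z : ℤ => (z:ℝ)) this
    have heven : (-1:ℝ)^(J+K) = 1 := by
      rcases hdvd with ⟨c, hc⟩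
      rw [hc]; rw [pow_mul]; norm_num
    rw [hflip, heven, one_mul]
    set a := ((((J:ℤ)+K)/2 : ℤ) : ℝ) * u
    set b := ((((J:ℤ)+K)/2 : ℤ) : ℝ) * v
    set c := ((((J:ℤ)-K)/2 : ℤ) : ℝ) * u
    set d := ((((J:ℤ)-K)/2 : ℤ) : ℝ) * v
    have h1 : ((((J:ℤ)+K)/2 : ℤ) : ℝ) * (u+v) = a + b := by simp [a, b]; ring
    have h2 : ((((J:ℤ)-K)/2 : ℤ) : ℝ) * (u-v) = c - d := by simp [c, d]; ring
    have h3 : ((((J:ℤ)-K)/2 : ℤ) : ℝ) * (u+v) = c + d := by simp [c, d]; ring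
    have h4 : ((((J:ℤ)+K)/2 : ℤ) : ℝ) * (u-v) = a - b := by simp [a, b]; ring
    rw [h1, h2, h3, h4, trig4 a b c d]
    unfold Af
    have e1 : a + c = (J:ℝ) * u := by simp only [a, c]; rw [← add_mul, hJK]
    have e2 : b - d = (K:ℝ) * v := by simp only [b, d]; rw [← sub_mul, hJK']
    have e3 : a - c = (K:ℝ) * u := by simp only [a, c]; rw [← sub_mul, hJK']
    have e4 : b + d = (J:ℝ) * v := by simp only [b, d]; rw [← add_mul, hJK]
    rw [e1, e2, e3, e4]
    ring
  · next hdvd =>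
    have hodd : (-1:ℝ)^(J+K) = -1 := Odd.neg_one_pow (Nat.odd_iff.mpr (by omega))
    rw [hflip, hodd]
    simp only [map_zero]
    ring

lemma eval_block (m : ℕ) (α γ : ℕ → ℝ) (P1 P2 : ℝ[X])
    (hα : P1 = ∑ J ∈ Finset.range (m+1), α J • T ℝ (J:ℤ))
    (hγ : P2 = ∑ K ∈ Finset.range (m+1), γ K • T ℝ (K:ℤ))
    (u v : ℝ) :
    MvPolynomial.eval ![Real.cos (u+v), Real.cos (u-v)] (block m α γ)
      = (P1.eval (Real.cos u) * P2.eval (Real.cos v)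
        + P2.eval (Real.cos u) * P1.eval (Real.cos v)
        + P1.eval (-Real.cos u) * P2.eval (-Real.cos v)
        + P2.eval (-Real.cos u) * P1.eval (-Real.cos v)) / 2 := by
  have hEv : ∀ (Q : ℝ[X]) (β : ℕ → ℝ), (Q = ∑ J ∈ Finset.range (m+1), β J • T ℝ (J:ℤ)) →
      ∀ t : ℝ, Q.eval (Real.cos t) = ∑ J ∈ Finset.range (m+1), β J * Real.cos ((J:ℝ)*t) := by
    intro Q β hQ t
    rw [hQ, Polynomial.eval_finset_sum]
    apply Finset.sum_congr rfl
    intro J _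
    rw [Polynomial.eval_smul, smul_eq_mul, T_real_cos]
    push_cast
    ring_nf
  have hsum : ∀ u' v' : ℝ,
      (∑ J ∈ Finset.range (m+1), ∑ K ∈ Finset.range (m+1), (α J * γ K) * Af J K u' v')
        = P1.eval (Real.cos u') * P2.eval (Real.cos v')
          + P2.eval (Real.cos u') * P1.eval (Real.cos v') := by
    intro u' v'
    rw [hEv P1 α hα, hEv P1 α hα, hEv P2 γ hγ, hEv P2 γ hγ]
    rw [Finset.sum_mul_sum, Finset.sum_mul_sum]
    rw [Finset.sum_comm (s := Finset.range (m+1)) (t := Finset.range (m+1))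
      (f := fun K J => (γ K * Real.cos ((K:ℝ)*u')) * (α J * Real.cos ((J:ℝ)*v')))]
    rw [← Finset.sum_add_distrib]
    apply Finset.sum_congr rfl
    intro J _
    rw [← Finset.sum_add_distrib]
    apply Finset.sum_congr rfl
    intro K _
    unfold Af
    ring
  unfold block
  rw [map_sum]
  have step : ∀ J ∈ Finset.range (m+1),
      MvPolynomial.eval ![Real.cos (u+v), Real.cos (u-v)]
        (∑ K ∈ Finset.range (m+1), (α J * γ K) • Phi J K)
      = ∑ K ∈ Finset.range (m+1), (α J * γ K) *
          ((Af J K u v + Af J K (u + Real.pi) (v + Real.pi)) / 2) := by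
    intro J _
    rw [map_sum]
    apply Finset.sum_congr rfl
    intro K _
    rw [MvPolynomial.smul_eq_C_mul, map_mul, MvPolynomial.eval_C, eval_Phi]
  rw [Finset.sum_congr rfl step]
  have rearr : ∑ J ∈ Finset.range (m+1), ∑ K ∈ Finset.range (m+1), (α J * γ K) *
        ((Af J K u v + Af J K (u + Real.pi) (v + Real.pi)) / 2)
      = ((∑ J ∈ Finset.range (m+1), ∑ K ∈ Finset.range (m+1), (α J * γ K) * Af J K u v)
        + (∑ J ∈ Finset.range (m+1), ∑ K ∈ Finset.range (m+1), (α J * γ K) *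
            Af J K (u + Real.pi) (v + Real.pi))) / 2 := by
    rw [← Finset.sum_add_distrib, Finset.sum_div]
    apply Finset.sum_congr rfl
    intro J _
    rw [← Finset.sum_add_distrib, Finset.sum_div]
    apply Finset.sum_congr rfl
    intro K _
    ring
  rw [rearr, hsum u v, hsum (u + Real.pi) (v + Real.pi), Real.cos_add_pi, Real.cos_add_pi]
  ring

lemma eval_block_grid (n : ℕ) (hn : 0 < n) (m : ℕ) (α γ : ℕ → ℝ) (P1 P2 : ℝ[X])
    (hα : P1 = ∑ J ∈ Finset.range (m+1), α J • T ℝ (J:ℤ))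
    (hγ : P2 = ∑ K ∈ Finset.range (m+1), γ K • T ℝ (K:ℤ))
    (l1 l2 s d : ℤ) (hl1 : l1 = s + d) (hl2 : l2 = s - d) :
    MvPolynomial.eval ![Real.cos ((l1:ℝ) * Real.pi / n), Real.cos ((l2:ℝ) * Real.pi / n)]
        (block m α γ)
      = (P1.eval (node n s) * P2.eval (node n |d|)
        + P2.eval (node n s) * P1.eval (node n |d|)
        + P1.eval (node n ((n:ℤ) - s)) * P2.eval (node n ((n:ℤ) - |d|))
        + P2.eval (node n ((n:ℤ) - s)) * P1.eval (node n ((n:ℤ) - |d|))) / 2 := by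
  set u : ℝ := (s:ℝ) * Real.pi / n with hu
  set v : ℝ := (d:ℝ) * Real.pi / n with hv
  have h1 : (l1:ℝ) * Real.pi / n = u + v := by rw [hl1]; push_cast; ring
  have h2 : (l2:ℝ) * Real.pi / n = u - v := by rw [hl2]; push_cast; ring
  rw [h1, h2, eval_block m α γ P1 P2 hα hγ u v]
  have hcu : Real.cos u = node n s := rfl
  have hcv : Real.cos v = node n |d| := by rw [node_abs]; rfl
  have hncu : -Real.cos u = node n ((n:ℤ) - s) := by rw [node_reflect hn s, hcu]
  have hncv : -Real.cos v = node n ((n:ℤ) - |d|) := by rw [node_reflect hn |d|, hcv]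
  rw [hncu, hncv, hcu, hcv]

def lag (n : ℕ) (S : Finset ℤ) (i : ℤ) : ℝ[X] := Lagrange.basis S (node n) i

lemma lag_eval {n : ℕ} (hn : 0 < n) (S : Finset ℤ) (hS : (S:Set ℤ) ⊆ Set.Icc (0:ℤ) (n:ℤ))
    (i t : ℤ) (hi : i ∈ S) (ht : t ∈ S) :
    (lag n S i).eval (node n t) = if t = i then 1 else 0 := by
  have hinj : Set.InjOn (node n) S := (node_injOn hn).mono hS
  unfold lag
  split
  · next h => rw [h]; exact Lagrange.eval_basis_self hinj hi
  · next h => exact Lagrange.eval_basis_of_ne (fun hh => h (hh ▸ rfl)) ht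

set_option maxHeartbeats 1000000 in
lemma exists_sym (n : ℕ) (hn : 0 < n) (s₀ d₀ : ℤ) (h0 : 0 ≤ d₀) (h1 : d₀ ≤ s₀)
    (h2 : s₀ + d₀ ≤ (n:ℤ)) :
    ∃ P : MvPolynomial (Fin 2) ℝ, P.totalDegree ≤ n ∧ ∃ c : ℝ, 1/2 ≤ c ∧
      ∀ l1 l2 s d : ℤ, l1 = s + d → l2 = s - d → 0 ≤ l1 → l1 ≤ n → 0 ≤ l2 → l2 ≤ n →
        MvPolynomial.eval ![Real.cos ((l1:ℝ) * Real.pi / n), Real.cos ((l2:ℝ) * Real.pi / n)] P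
          = if s = s₀ ∧ |d| = d₀ then c else 0 := by
  set S : Finset ℤ := Finset.Icc (0:ℤ) (n:ℤ) with hSdef
  have hS : (S:Set ℤ) ⊆ Set.Icc (0:ℤ) (n:ℤ) := by rw [hSdef]; simp
  have hs₀ : s₀ ∈ S := by rw [hSdef]; rw [Finset.mem_Icc]; omega
  have hd₀ : d₀ ∈ S := by rw [hSdef]; rw [Finset.mem_Icc]; omega
  have hinj : Set.InjOn (node n) S := (node_injOn hn).mono hS
  have hcard : S.card = n + 1 := by rw [hSdef, Int.card_Icc]; omega
  have hdeg1 : (lag n S s₀).natDegree ≤ n := by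
    unfold lag; rw [Lagrange.natDegree_basis hinj hs₀]; omega
  have hdeg2 : (lag n S d₀).natDegree ≤ n := by
    unfold lag; rw [Lagrange.natDegree_basis hinj hd₀]; omega
  obtain ⟨α, hα⟩ := exists_cheb_coeffs n (lag n S s₀) hdeg1
  obtain ⟨γ, hγ⟩ := exists_cheb_coeffs n (lag n S d₀) hdeg2
  refine ⟨block n α γ, totalDegree_block n α γ, ?_⟩
  -- the value of the grid formula at a pair (s, e) of indices in [0, n]
  have hval : ∀ s e : ℤ, 0 ≤ e → e ≤ s → s + e ≤ (n:ℤ) →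
      ((lag n S s₀).eval (node n s) * (lag n S d₀).eval (node n e)
        + (lag n S d₀).eval (node n s) * (lag n S s₀).eval (node n e)
        + (lag n S s₀).eval (node n ((n:ℤ) - s)) * (lag n S d₀).eval (node n ((n:ℤ) - e))
        + (lag n S d₀).eval (node n ((n:ℤ) - s)) * (lag n S s₀).eval (node n ((n:ℤ) - e))) / 2
      = ((if s = s₀ then (1:ℝ) else 0) * (if e = d₀ then 1 else 0)
        + (if s = d₀ then (1:ℝ) else 0) * (if e = s₀ then 1 else 0)
        + (if (n:ℤ) - s = s₀ then (1:ℝ) else 0) * (if (n:ℤ) - e = d₀ then 1 else 0)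
        + (if (n:ℤ) - s = d₀ then (1:ℝ) else 0) * (if (n:ℤ) - e = s₀ then 1 else 0)) / 2 := by
    intro s e he0 hes hsn
    have m1 : s ∈ S := by rw [hSdef, Finset.mem_Icc]; omega
    have m2 : e ∈ S := by rw [hSdef, Finset.mem_Icc]; omega
    have m3 : (n:ℤ) - s ∈ S := by rw [hSdef, Finset.mem_Icc]; omega
    have m4 : (n:ℤ) - e ∈ S := by rw [hSdef, Finset.mem_Icc]; omega
    rw [lag_eval hn S hS s₀ s hs₀ m1, lag_eval hn S hS d₀ e hd₀ m2,
      lag_eval hn S hS d₀ s hd₀ m1, lag_eval hn S hS s₀ e hs₀ m2,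
      lag_eval hn S hS s₀ ((n:ℤ)-s) hs₀ m3, lag_eval hn S hS d₀ ((n:ℤ)-e) hd₀ m4,
      lag_eval hn S hS d₀ ((n:ℤ)-s) hd₀ m3, lag_eval hn S hS s₀ ((n:ℤ)-e) hs₀ m4]
  set c : ℝ := ((if s₀ = s₀ then (1:ℝ) else 0) * (if d₀ = d₀ then 1 else 0)
        + (if s₀ = d₀ then (1:ℝ) else 0) * (if d₀ = s₀ then 1 else 0)
        + (if (n:ℤ) - s₀ = s₀ then (1:ℝ) else 0) * (if (n:ℤ) - d₀ = d₀ then 1 else 0)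
        + (if (n:ℤ) - s₀ = d₀ then (1:ℝ) else 0) * (if (n:ℤ) - d₀ = s₀ then 1 else 0)) / 2
    with hcdef
  have hc : 1/2 ≤ c := by
    rw [hcdef]
    split_ifs <;> (first | (exfalso; omega) | norm_num)
  refine ⟨c, hc, ?_⟩
  intro l1 l2 s d hl1 hl2 hb1 hb2 hb3 hb4
  rw [eval_block_grid n hn n α γ _ _ hα hγ l1 l2 s d hl1 hl2]
  have habs1 : -d ≤ |d| ∧ d ≤ |d| ∧ (|d| = d ∨ |d| = -d) := ⟨neg_le_abs d, le_abs_self d, abs_choice d⟩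
  set e : ℤ := |d| with hedef
  have he0 : 0 ≤ e := abs_nonneg d
  have hes : e ≤ s := by omega
  have hsn : s + e ≤ (n:ℤ) := by omega
  rw [hval s e he0 hes hsn]
  by_cases hcond : s = s₀ ∧ e = d₀
  · rw [if_pos hcond, hcond.1, hcond.2, hcdef]
  · rw [if_neg hcond]
    have h' : ¬(s = s₀) ∨ ¬(e = d₀) := by tauto
    rcases h' with h' | h' <;> split_ifs <;> (first | (exfalso; omega) | norm_num)

set_option maxHeartbeats 1000000 in
lemma exists_asym (n : ℕ) (hn : 0 < n) (s₀ d₀ : ℤ) (h0 : 1 ≤ d₀) (h1 : d₀ ≤ s₀)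
    (h2 : s₀ + d₀ ≤ (n:ℤ)) :
    ∃ P : MvPolynomial (Fin 2) ℝ, P.totalDegree ≤ n ∧ ∃ c : ℝ, 1/2 ≤ c ∧
      ∀ l1 l2 s d : ℤ, l1 = s + d → l2 = s - d → 0 ≤ l1 → l1 ≤ n → 0 ≤ l2 → l2 ≤ n →
        MvPolynomial.eval ![Real.cos ((l1:ℝ) * Real.pi / n), Real.cos ((l2:ℝ) * Real.pi / n)] P
          = (node n l1 - node n l2) * (if s = s₀ ∧ |d| = d₀ then c else 0) := by
  have hn2 : 2 ≤ (n:ℤ) := by omega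
  set S : Finset ℤ := Finset.Icc (1:ℤ) ((n:ℤ)-1) with hSdef
  have hS : (S:Set ℤ) ⊆ Set.Icc (0:ℤ) (n:ℤ) := by
    rw [hSdef]; intro x hx; simp at hx ⊢; omega
  have hs₀ : s₀ ∈ S := by rw [hSdef]; rw [Finset.mem_Icc]; omega
  have hd₀ : d₀ ∈ S := by rw [hSdef]; rw [Finset.mem_Icc]; omega
  have hinj : Set.InjOn (node n) S := (node_injOn hn).mono hS
  have hcard : S.card = n - 1 := by rw [hSdef, Int.card_Icc]; omega
  have hdeg1 : (lag n S s₀).natDegree ≤ n - 1 := by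
    unfold lag; rw [Lagrange.natDegree_basis hinj hs₀]; omega
  have hdeg2 : (lag n S d₀).natDegree ≤ n - 1 := by
    unfold lag; rw [Lagrange.natDegree_basis hinj hd₀]; omega
  obtain ⟨α, hα⟩ := exists_cheb_coeffs (n-1) (lag n S s₀) hdeg1
  obtain ⟨γ, hγ⟩ := exists_cheb_coeffs (n-1) (lag n S d₀) hdeg2
  refine ⟨(MvPolynomial.X 0 - MvPolynomial.X 1) * block (n-1) α γ, ?_, ?_⟩
  · apply le_trans (MvPolynomial.totalDegree_mul _ _)
    have hfac : (MvPolynomial.X 0 - MvPolynomial.X 1 : MvPolynomial (Fin 2) ℝ).totalDegree ≤ 1 :=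
      le_trans (MvPolynomial.totalDegree_sub _ _) (by simp [MvPolynomial.totalDegree_X])
    have hb := totalDegree_block (n-1) α γ
    omega
  have hval : ∀ s e : ℤ, 1 ≤ e → e ≤ s → s + e ≤ (n:ℤ) →
      ((lag n S s₀).eval (node n s) * (lag n S d₀).eval (node n e)
        + (lag n S d₀).eval (node n s) * (lag n S s₀).eval (node n e)
        + (lag n S s₀).eval (node n ((n:ℤ) - s)) * (lag n S d₀).eval (node n ((n:ℤ) - e))
        + (lag n S d₀).eval (node n ((n:ℤ) - s)) * (lag n S s₀).eval (node n ((n:ℤ) - e))) / 2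
      = ((if s = s₀ then (1:ℝ) else 0) * (if e = d₀ then 1 else 0)
        + (if s = d₀ then (1:ℝ) else 0) * (if e = s₀ then 1 else 0)
        + (if (n:ℤ) - s = s₀ then (1:ℝ) else 0) * (if (n:ℤ) - e = d₀ then 1 else 0)
        + (if (n:ℤ) - s = d₀ then (1:ℝ) else 0) * (if (n:ℤ) - e = s₀ then 1 else 0)) / 2 := by
    intro s e he0 hes hsn
    have m1 : s ∈ S := by rw [hSdef, Finset.mem_Icc]; omega
    have m2 : e ∈ S := by rw [hSdef, Finset.mem_Icc]; omega
    have m3 : (n:ℤ) - s ∈ S := by rw [hSdef, Finset.mem_Icc]; omega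
    have m4 : (n:ℤ) - e ∈ S := by rw [hSdef, Finset.mem_Icc]; omega
    rw [lag_eval hn S hS s₀ s hs₀ m1, lag_eval hn S hS d₀ e hd₀ m2,
      lag_eval hn S hS d₀ s hd₀ m1, lag_eval hn S hS s₀ e hs₀ m2,
      lag_eval hn S hS s₀ ((n:ℤ)-s) hs₀ m3, lag_eval hn S hS d₀ ((n:ℤ)-e) hd₀ m4,
      lag_eval hn S hS d₀ ((n:ℤ)-s) hd₀ m3, lag_eval hn S hS s₀ ((n:ℤ)-e) hs₀ m4]
  set c : ℝ := ((if s₀ = s₀ then (1:ℝ) else 0) * (if d₀ = d₀ then 1 else 0)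
        + (if s₀ = d₀ then (1:ℝ) else 0) * (if d₀ = s₀ then 1 else 0)
        + (if (n:ℤ) - s₀ = s₀ then (1:ℝ) else 0) * (if (n:ℤ) - d₀ = d₀ then 1 else 0)
        + (if (n:ℤ) - s₀ = d₀ then (1:ℝ) else 0) * (if (n:ℤ) - d₀ = s₀ then 1 else 0)) / 2
    with hcdef
  have hc : 1/2 ≤ c := by
    rw [hcdef]
    split_ifs <;> (first | (exfalso; omega) | norm_num)
  refine ⟨c, hc, ?_⟩
  intro l1 l2 s d hl1 hl2 hb1 hb2 hb3 hb4
  have hsplit : MvPolynomial.eval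
      ![Real.cos ((l1:ℝ) * Real.pi / n), Real.cos ((l2:ℝ) * Real.pi / n)]
      ((MvPolynomial.X 0 - MvPolynomial.X 1) * block (n-1) α γ)
      = (node n l1 - node n l2) * MvPolynomial.eval
          ![Real.cos ((l1:ℝ) * Real.pi / n), Real.cos ((l2:ℝ) * Real.pi / n)] (block (n-1) α γ) := by
    rw [map_mul, map_sub, MvPolynomial.eval_X, MvPolynomial.eval_X]
    rfl
  rw [hsplit]
  rcases eq_or_ne d 0 with hd0 | hd0
  · have hll : l1 = l2 := by omega
    have : node n l1 - node n l2 = 0 := by rw [hll]; ring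
    rw [this, zero_mul, zero_mul]
  · have habs1 : -d ≤ |d| ∧ d ≤ |d| ∧ (|d| = d ∨ |d| = -d) :=
      ⟨neg_le_abs d, le_abs_self d, abs_choice d⟩
    have hm : n - 1 + 1 = n := by omega
    have hgrid := eval_block_grid n hn (n-1) α γ _ _ hα hγ l1 l2 s d hl1 hl2
    rw [hgrid]
    set e : ℤ := |d| with hedef
    have he0 : 1 ≤ e := by omega
    have hes : e ≤ s := by omega
    have hsn : s + e ≤ (n:ℤ) := by omega
    rw [hval s e he0 hes hsn]
    by_cases hcond : s = s₀ ∧ e = d₀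
    · rw [if_pos hcond, hcond.1, hcond.2, hcdef, mul_comm]
    · rw [if_neg hcond]
      have h' : ¬(s = s₀) ∨ ¬(e = d₀) := by tauto
      rw [mul_zero]
      rcases h' with h' | h' <;> split_ifs <;> (first | (exfalso; omega) | norm_num)

lemma mem_Xi2 {n : ℕ} {k : ℤ × ℤ} : k ∈ Xi2 n ↔
    0 ≤ k.1 ∧ k.1 ≤ (n:ℤ) ∧ 0 ≤ k.2 ∧ k.2 ≤ (n:ℤ) ∧ k.1 % 2 = k.2 % 2 := by
  unfold Xi2
  rw [Finset.mem_filter, Finset.mem_Icc, Prod.le_def, Prod.le_def]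
  constructor
  · rintro ⟨⟨⟨a,b⟩,⟨c,d⟩⟩, e⟩; exact ⟨a, c, b, d, e⟩
  · rintro ⟨a, b, c, d, e⟩; exact ⟨⟨⟨a,c⟩,⟨b,d⟩⟩, e⟩

set_option maxHeartbeats 1000000 in
lemma key (n : ℕ) (hn : 0 < n) (k : ℤ × ℤ) (hk : k ∈ Xi2 n) :
    ∃ L : MvPolynomial (Fin 2) ℝ, L.totalDegree ≤ n ∧
      ∀ l ∈ Xi2 n,
        MvPolynomial.eval ![Real.cos ((l.1:ℝ) * Real.pi / n), Real.cos ((l.2:ℝ) * Real.pi / n)] L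
          = if l = k then 1 else 0 := by
  rw [mem_Xi2] at hk
  obtain ⟨hk1, hk2, hk3, hk4, hk5⟩ := hk
  set s₀ : ℤ := (k.1 + k.2)/2 with hs₀def
  set D : ℤ := (k.1 - k.2)/2 with hDdef
  have hkd1 : k.1 = s₀ + D := by omega
  have hkd2 : k.2 = s₀ - D := by omega
  have habsD : -D ≤ |D| ∧ D ≤ |D| ∧ (|D| = D ∨ |D| = -D) :=
    ⟨neg_le_abs D, le_abs_self D, abs_choice D⟩
  set d₀ : ℤ := |D| with hd₀def
  have h0 : 0 ≤ d₀ := abs_nonneg D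
  have h1 : d₀ ≤ s₀ := by omega
  have h2 : s₀ + d₀ ≤ (n:ℤ) := by omega
  obtain ⟨Ps, hPsdeg, cs, hcs, hPs⟩ := exists_sym n hn s₀ d₀ h0 h1 h2
  have hcs0 : cs ≠ 0 := by linarith
  rcases eq_or_ne k.1 k.2 with hdiag | hdiag
  · -- diagonal point
    have hD0 : D = 0 := by omega
    refine ⟨cs⁻¹ • Ps, ?_, ?_⟩
    · exact le_trans (MvPolynomial.totalDegree_smul_le _ _) hPsdeg
    · intro l hl
      rw [mem_Xi2] at hl
      obtain ⟨hl1, hl2, hl3, hl4, hl5⟩ := hl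
      set sl : ℤ := (l.1 + l.2)/2 with hsldef
      set Dl : ℤ := (l.1 - l.2)/2 with hDldef
      have hld1 : l.1 = sl + Dl := by omega
      have hld2 : l.2 = sl - Dl := by omega
      have habsDl : -Dl ≤ |Dl| ∧ Dl ≤ |Dl| ∧ (|Dl| = Dl ∨ |Dl| = -Dl) :=
        ⟨neg_le_abs Dl, le_abs_self Dl, abs_choice Dl⟩
      rw [MvPolynomial.smul_eq_C_mul, map_mul, MvPolynomial.eval_C,
        hPs l.1 l.2 sl Dl hld1 hld2 hl1 hl2 hl3 hl4]
      by_cases hcond : sl = s₀ ∧ |Dl| = d₀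
      · have hlk : l = k := by
          have h' : l.1 = k.1 ∧ l.2 = k.2 := by
            obtain ⟨hca, hcb⟩ := hcond
            omega
          exact Prod.ext h'.1 h'.2
        rw [if_pos hcond, if_pos hlk]
        field_simp
      · have hlk : l ≠ k := by
          intro h
          apply hcond
          rw [h] at hld1 hld2
          constructor <;> omega
        rw [if_neg hcond, if_neg hlk, mul_zero]
  · -- off-diagonal point
    have h0' : 1 ≤ d₀ := by omega
    obtain ⟨Pa, hPadeg, ca, hca, hPa⟩ := exists_asym n hn s₀ d₀ h0' h1 h2
    have hca0 : ca ≠ 0 := by linarith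
    set w : ℝ := node n k.1 - node n k.2 with hwdef
    have hw : w ≠ 0 := by
      rw [hwdef]
      apply sub_ne_zero_of_ne
      intro h
      exact hdiag ((node_injOn hn) (Set.mem_Icc.mpr ⟨hk1, hk2⟩) (Set.mem_Icc.mpr ⟨hk3, hk4⟩) h)
    refine ⟨(2⁻¹ * cs⁻¹) • Ps + (2⁻¹ * ca⁻¹ * w⁻¹) • Pa, ?_, ?_⟩
    · apply le_trans (MvPolynomial.totalDegree_add _ _)
      apply max_le
      · exact le_trans (MvPolynomial.totalDegree_smul_le _ _) hPsdeg
      · exact le_trans (MvPolynomial.totalDegree_smul_le _ _) hPadeg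
    · intro l hl
      rw [mem_Xi2] at hl
      obtain ⟨hl1, hl2, hl3, hl4, hl5⟩ := hl
      set sl : ℤ := (l.1 + l.2)/2 with hsldef
      set Dl : ℤ := (l.1 - l.2)/2 with hDldef
      have hld1 : l.1 = sl + Dl := by omega
      have hld2 : l.2 = sl - Dl := by omega
      have habsDl : -Dl ≤ |Dl| ∧ Dl ≤ |Dl| ∧ (|Dl| = Dl ∨ |Dl| = -Dl) :=
        ⟨neg_le_abs Dl, le_abs_self Dl, abs_choice Dl⟩
      simp only [map_add, MvPolynomial.smul_eq_C_mul, map_mul, MvPolynomial.eval_C]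
      rw [hPs l.1 l.2 sl Dl hld1 hld2 hl1 hl2 hl3 hl4,
        hPa l.1 l.2 sl Dl hld1 hld2 hl1 hl2 hl3 hl4]
      by_cases hcond : sl = s₀ ∧ |Dl| = d₀
      · rw [if_pos hcond, if_pos hcond]
        have hcases : (l.1 = k.1 ∧ l.2 = k.2) ∨ (l.1 = k.2 ∧ l.2 = k.1) := by
          obtain ⟨hca', hcb'⟩ := hcond
          omega
        rcases hcases with hc | hc
        · have hlk : l = k := Prod.ext hc.1 hc.2
          rw [if_pos hlk, hc.1, hc.2, ← hwdef]
          field_simp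
          ring
        · have hlk : l ≠ k := by
            intro h
            rw [h] at hc
            exact hdiag (hc.1.symm ▸ hc.2 ▸ rfl)
          rw [if_neg hlk, hc.1, hc.2]
          have : node n k.2 - node n k.1 = -w := by rw [hwdef]; ring
          rw [this]
          field_simp
          ring
      · have hlk : l ≠ k := by
          intro h
          apply hcond
          rw [h] at hld1 hld2
          constructor <;> omega
        rw [if_neg hcond, if_neg hcond, if_neg hlk, mul_zero, mul_zero, mul_zero]
        ring

end XuInterp

theorem polynomial_interpolation_exists_2d (n : ℕ) (hn : 0 < n) (y : ℤ × ℤ → ℝ) :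
    ∃ p : MvPolynomial (Fin 2) ℝ, p.totalDegree ≤ n ∧
      ∀ k ∈ Xi2 n,
        MvPolynomial.eval
          ![Real.cos (k.1 * Real.pi / n), Real.cos (k.2 * Real.pi / n)] p = y k := by
  classical
  have hchoice : ∀ k : {x // x ∈ Xi2 n}, ∃ L : MvPolynomial (Fin 2) ℝ, L.totalDegree ≤ n ∧
      ∀ l ∈ Xi2 n,
        MvPolynomial.eval ![Real.cos ((l.1:ℝ) * Real.pi / n),
          Real.cos ((l.2:ℝ) * Real.pi / n)] L = if l = ↑k then 1 else 0 :=
    fun k => XuInterp.key n hn k k.2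
  choose L hdeg heval using hchoice
  refine ⟨∑ k ∈ (Xi2 n).attach, y ↑k • L k, ?_, ?_⟩
  · apply le_trans (MvPolynomial.totalDegree_finset_sum _ _)
    apply Finset.sup_le
    intro b _
    exact le_trans (MvPolynomial.totalDegree_smul_le _ _) (hdeg b)
  · intro k hk
    rw [map_sum]
    rw [Finset.sum_eq_single (⟨k, hk⟩ : {x // x ∈ Xi2 n})]
    · rw [MvPolynomial.smul_eq_C_mul, map_mul, MvPolynomial.eval_C, heval ⟨k, hk⟩ k hk]
      simp
    · intro b _ hb
      rw [MvPolynomial.smul_eq_C_mul, map_mul, MvPolynomial.eval_C, heval b k hk, if_neg,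
        mul_zero]
      intro h
      exact hb (Subtype.ext h.symm)
    · intro h
      exact absurd (Finset.mem_attach _ _) h
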